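/- Let r > 0 and consider points in ℝ × {0, r} with Euclidean distance. Suppose x < y with y − x ≤ r, ι_x, ι_y ∈ {0, r} with ι_x ≠ ι_y, and let p be a point of ℝ × {0,r} with first coordinate less than x, and q a point with first coordinate greater than y. Then min(d(p,(x,ι_x)), d(p,(y,ι_y))) < d(p,q). -/
import Mathlib

lemma sqrt_sq_add_sq_ge (a b : ℝ) (ha : 0 ≤ a) : a ≤ Real.sqrt (a ^ 2 + b ^ 2) := by
  calc a = Real.sqrt (a ^ 2) := by rw [Real.sqrt_sq ha]
    _ ≤ _ := Real.sqrt_le_sqrt (by nlinarith [sq_nonneg b])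

/-- If two points at horizontal positions x < y, y − x ≤ r, lie on different
lines of ℝ × {0,r}, then any point p strictly to the left of x is strictly closer to one of
them than to any point q strictly to the right of y. -/
theorem stmt11 (r : ℝ) (hr : 0 < r) (x y ιx ιy : ℝ)
    (hιx : ιx ∈ ({0, r} : Set ℝ)) (hιy : ιy ∈ ({0, r} : Set ℝ)) (hne : ιx ≠ ιy)
    (hxy : x < y) (hclose : y - x ≤ r)
    (p q : ℝ × ℝ) (hp2 : p.2 ∈ ({0, r} : Set ℝ)) (hq2 : q.2 ∈ ({0, r} : Set ℝ))
    (hp : p.1 < x) (hq : q.1 > y) :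
    min (Real.sqrt ((x - p.1) ^ 2 + (ιx - p.2) ^ 2))
        (Real.sqrt ((y - p.1) ^ 2 + (ιy - p.2) ^ 2))
      < Real.sqrt ((q.1 - p.1) ^ 2 + (q.2 - p.2) ^ 2) := by
  have hRHS : q.1 - p.1 ≤ Real.sqrt ((q.1 - p.1) ^ 2 + (q.2 - p.2) ^ 2) :=
    sqrt_sq_add_sq_ge _ _ (by linarith)
  have hcase : p.2 = ιx ∨ p.2 = ιy := by
    rcases hιx with h | h <;> rcases hιy with h' | h' <;> rcases hp2 with h'' | h'' <;>
      simp_all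
  rcases hcase with h | h
  · have h1 : Real.sqrt ((x - p.1) ^ 2 + (ιx - p.2) ^ 2) = x - p.1 := by
      rw [← h]
      simpa using Real.sqrt_sq (by linarith : (0:ℝ) ≤ x - p.1)
    calc min _ _ ≤ Real.sqrt ((x - p.1) ^ 2 + (ιx - p.2) ^ 2) := min_le_left _ _
      _ = x - p.1 := h1
      _ < q.1 - p.1 := by linarith
      _ ≤ _ := hRHS
  · have h1 : Real.sqrt ((y - p.1) ^ 2 + (ιy - p.2) ^ 2) = y - p.1 := by
      rw [← h]
      simpa using Real.sqrt_sq (by linarith : (0:ℝ) ≤ y - p.1)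
    calc min _ _ ≤ Real.sqrt ((y - p.1) ^ 2 + (ιy - p.2) ^ 2) := min_le_right _ _
      _ = y - p.1 := h1
      _ < q.1 - p.1 := by linarith
      _ ≤ _ := hRHS
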